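/- Let V : ℤ → ℝ≥0 be a finitely supported nonnegative vector. Then the support of V has size at least s if and only if the s×s matrix A with entries A_{i,j} = ∑_k k^{i+j} V(k) (for 0 ≤ i,j < s) is nonsingular. -/

import Mathlib

open Polynomial Matrix Finset

/-- A nonnegative finitely supported vector `V` on `ℤ` has support of size at least `s`
iff its `s × s` Hankel moment matrix `A_{i,j} = ∑_k k^{i+j} V(k)` is nonsingular. -/
theorem sparsity_test_moment_matrix (s : ℕ) (V : ℤ →₀ ℝ) (hV : ∀ k, 0 ≤ V k) :
    s ≤ V.support.card ↔
      (Matrix.of fun i j : Fin s =>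
        ∑ k ∈ V.support, (k : ℝ) ^ ((i : ℕ) + (j : ℕ)) * V k).det ≠ 0 := by
  classical
  set A : Matrix (Fin s) (Fin s) ℝ := Matrix.of fun i j : Fin s =>
      ∑ k ∈ V.support, (k : ℝ) ^ ((i : ℕ) + (j : ℕ)) * V k with hA
  -- key identity for quadratic forms
  have key : ∀ x : Fin s → ℝ, ∀ i : Fin s,
      (A *ᵥ x) i = ∑ k ∈ V.support, (k : ℝ) ^ (i : ℕ) * V k *
        (∑ j : Fin s, x j * (k : ℝ) ^ (j : ℕ)) := by
    intro x i
    simp only [Matrix.mulVec, dotProduct, hA, Matrix.of_apply, Finset.sum_mul,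
      Finset.mul_sum]
    rw [Finset.sum_comm]
    refine Finset.sum_congr rfl fun k _ => Finset.sum_congr rfl fun j _ => ?_
    rw [pow_add]; ring
  constructor
  · -- s ≤ card ⇒ det ≠ 0, via positive definiteness
    intro hs
    have hpd : A.PosDef := by
      refine Matrix.PosDef.of_dotProduct_mulVec_pos ?_ ?_
      · ext i j
        simp [hA, Matrix.conjTranspose, Nat.add_comm (j : ℕ) (i : ℕ)]
      · intro x hx
        have hs0 : 0 < s := by
          rcases Nat.eq_zero_or_pos s with h | h
          · subst h; exact absurd (_root_.funext fun i => i.elim0) hx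
          · exact h
        have hquad : star x ⬝ᵥ (A *ᵥ x) =
            ∑ k ∈ V.support, V k * (∑ j : Fin s, x j * (k : ℝ) ^ (j : ℕ)) ^ 2 := by
          simp only [dotProduct, Pi.star_apply, star_trivial, key, Finset.mul_sum]
          rw [Finset.sum_comm]
          refine Finset.sum_congr rfl fun k _ => ?_
          rw [sq, Finset.sum_mul_sum, Finset.mul_sum]
          refine Finset.sum_congr rfl fun a _ => ?_
          rw [Finset.mul_sum]
          refine Finset.sum_congr rfl fun b _ => ?_
          ring
        rw [hquad]
        have hnonneg : ∀ k ∈ V.support,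
            0 ≤ V k * (∑ j : Fin s, x j * (k : ℝ) ^ (j : ℕ)) ^ 2 :=
          fun k _ => mul_nonneg (hV k) (sq_nonneg _)
        rcases (Finset.sum_nonneg hnonneg).lt_or_eq with h | h
        · exact h
        exfalso
        have hzero : ∀ k ∈ V.support,
            V k * (∑ j : Fin s, x j * (k : ℝ) ^ (j : ℕ)) ^ 2 = 0 :=
          (Finset.sum_eq_zero_iff_of_nonneg hnonneg).mp h.symm
        set q : ℝ[X] := ∑ j : Fin s, C (x j) * X ^ (j : ℕ) with hq
        have hcoeff : ∀ i : Fin s, q.coeff i = x i := by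
          intro i
          rw [hq, Polynomial.finset_sum_coeff]
          rw [Finset.sum_eq_single i (fun j _ hj => by
            simp only [Polynomial.coeff_C_mul, Polynomial.coeff_X_pow]
            rw [if_neg (fun h => hj (Fin.ext (by omega))), mul_zero]) (by simp)]
          simp
        have heval : ∀ k ∈ V.support, q.eval (k : ℝ) = 0 := by
          intro k hk
          have h1 : q.eval (k : ℝ) = ∑ j : Fin s, x j * (k : ℝ) ^ (j : ℕ) := by
            simp [hq, Polynomial.eval_finset_sum]
          have h2 := hzero k hk
          have hVk : 0 < V k := (hV k).lt_of_ne (Ne.symm (Finsupp.mem_support_iff.mp hk))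
          rw [mul_eq_zero] at h2
          rcases h2 with h2 | h2
          · exact absurd h2 hVk.ne'
          · rw [h1]; exact pow_eq_zero_iff (two_ne_zero) |>.mp h2
        have hqdeg : q.natDegree < V.support.card := by
          refine lt_of_lt_of_le (lt_of_le_of_lt ?_ (Nat.sub_lt hs0 one_pos)) hs
          exact Polynomial.natDegree_sum_le_of_forall_le _ _ fun j _ =>
            (Polynomial.natDegree_C_mul_X_pow_le _ _).trans (Nat.le_sub_one_of_lt j.2)
        have hq0 : q = 0 :=
          Polynomial.eq_zero_of_natDegree_lt_card_of_eval_eq_zero q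
            (fun a b : V.support => fun hab => Subtype.ext (by exact_mod_cast hab))
            (fun k => heval k k.2) (by simpa using hqdeg)
        apply hx
        funext i
        rw [← hcoeff i, hq0, Polynomial.coeff_zero, Pi.zero_apply]
    exact hpd.det_pos.ne'
  · -- card < s ⇒ det = 0
    intro hdet
    by_contra hs
    push_neg at hs
    apply hdet
    rw [← Matrix.exists_mulVec_eq_zero_iff]
    set p : ℝ[X] := ∏ k ∈ V.support, (X - C (k : ℝ)) with hp
    have hmonic : p.Monic := monic_prod_of_monic _ _ fun k _ => monic_X_sub_C _
    have hdeg : p.natDegree = V.support.card := by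
      rw [hp, natDegree_prod_of_monic _ _ fun k _ => monic_X_sub_C _]
      trans ∑ _k ∈ V.support, 1
      · exact Finset.sum_congr rfl fun k _ => Polynomial.natDegree_X_sub_C _
      · simp
    refine ⟨fun i => p.coeff i, ?_, ?_⟩
    · intro h0
      have := congrFun h0 ⟨V.support.card, hs⟩
      simp only [Pi.zero_apply] at this
      rw [← hdeg] at this
      rw [hmonic.coeff_natDegree] at this
      exact one_ne_zero this
    · funext i
      rw [key]
      have heval : ∀ k ∈ V.support, (∑ j : Fin s, p.coeff j * (k : ℝ) ^ (j : ℕ)) = 0 := by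
        intro k hk
        have : (∑ j : Fin s, p.coeff j * (k : ℝ) ^ (j : ℕ)) = p.eval (k : ℝ) := by
          rw [eval_eq_sum_range' (hdeg ▸ hs) ((k : ℝ))]
          exact Fin.sum_univ_eq_sum_range (fun i => p.coeff i * (k : ℝ) ^ i) s
        rw [this, hp]
        simp only [eval_prod, eval_sub, eval_X, eval_C]
        exact Finset.prod_eq_zero hk (by ring)
      rw [Finset.sum_congr rfl fun k hk => by rw [heval k hk, mul_zero]]
      simp
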